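/- The set {ξ ∈ ℝⁿ : Σ_{j=1}^{n−1} kⱼ φⱼ(ξ) ∇φⱼ(ξ) = 0} equals P ∪ C, where P = {ξ ∈ ℝⁿ : φᵢ(ξ) = 0 for all i = 1, …, n−1} and C = {ξ ∈ ℝⁿ : χ(ξ) = 0}. -/

import Mathlib

open scoped RealInnerProductSpace

lemma sum_fin_dite {n m : ℕ} (h : m ≤ n) (F : Fin m → ℝ) :
    ∑ j : Fin n, (if hj : (j : ℕ) < m then F ⟨j, hj⟩ else 0) = ∑ i : Fin m, F i := by
  have h2 : ∑ i : Fin m, F i = ∑ j : Fin m, (if hj : (j : ℕ) < m then F ⟨j, hj⟩ else 0) :=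
    Finset.sum_congr rfl (fun i _ => by rw [dif_pos i.isLt])
  rw [h2, Fin.sum_univ_eq_sum_range (fun j => if hj : j < m then F ⟨j, hj⟩ else 0) n,
    Fin.sum_univ_eq_sum_range (fun j => if hj : j < m then F ⟨j, hj⟩ else 0) m]
  refine (Finset.sum_subset (Finset.range_subset_range.mpr h) ?_).symm
  intro x _ hx
  rw [dif_neg (by simpa using hx)]

theorem stmt4 (n : ℕ) (hn : 2 ≤ n)
    (k : Fin (n - 1) → ℝ) (hk : ∀ i, 0 < k i)
    (φ : Fin (n - 1) → EuclideanSpace ℝ (Fin n) → ℝ)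
    (hφ : ∀ i, ContDiff ℝ 1 (φ i))
    (bot : EuclideanSpace ℝ (Fin n) → EuclideanSpace ℝ (Fin n))
    (hbot : ∀ ξ u : EuclideanSpace ℝ (Fin n),
      ⟪bot ξ, u⟫ = Matrix.det (Matrix.of (fun (i j : Fin n) =>
        if h : (j : ℕ) < n - 1 then gradient (φ ⟨j, h⟩) ξ i else u i)))
    (χ : EuclideanSpace ℝ (Fin n) → EuclideanSpace ℝ (Fin n))
    (hχ : ∀ ξ, χ ξ = bot ξ - ∑ i, (k i * φ i ξ) • gradient (φ i) ξ)
    (P C : Set (EuclideanSpace ℝ (Fin n)))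
    (hP : P = {ξ | ∀ i, φ i ξ = 0})
    (hC : C = {ξ | χ ξ = 0}) :
    {ξ : EuclideanSpace ℝ (Fin n) | ∑ i, (k i * φ i ξ) • gradient (φ i) ξ = 0} = P ∪ C := by
  have hm : n - 1 ≤ n := Nat.sub_le n 1
  have hlast : n - 1 < n := by omega
  -- bot ξ is orthogonal to each gradient
  have horth : ∀ ξ (i₀ : Fin (n - 1)), ⟪bot ξ, (gradient (φ i₀) ξ : EuclideanSpace ℝ (Fin n))⟫ = 0 := by
    intro ξ i₀
    rw [hbot]
    apply Matrix.det_zero_of_column_eq (i := (⟨(i₀ : ℕ), lt_of_lt_of_le i₀.isLt hm⟩ : Fin n))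
      (j := ⟨n - 1, hlast⟩)
    · intro hcontra
      have := congrArg Fin.val hcontra
      simp at this
      omega
    · intro r
      simp only [Matrix.of_apply]
      rw [dif_pos i₀.isLt, dif_neg (lt_irrefl _)]
  ext ξ
  simp only [Set.mem_setOf_eq, Set.mem_union, hP, hC, hχ, Set.mem_setOf_eq]
  constructor
  · intro hS
    by_cases hall : ∀ i, φ i ξ = 0
    · exact Or.inl hall
    · push_neg at hall
      obtain ⟨i₀, hi₀⟩ := hall
      right
      rw [hS, sub_zero]
      -- show bot ξ = 0
      have hdet : ∀ u : EuclideanSpace ℝ (Fin n), ⟪bot ξ, u⟫ = 0 := by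
        intro u
        rw [hbot]
        rw [← Matrix.exists_mulVec_eq_zero_iff]
        refine ⟨fun j => if hj : (j : ℕ) < n - 1 then k ⟨j, hj⟩ * φ ⟨j, hj⟩ ξ else 0, ?_, ?_⟩
        · intro hv
          have := congrFun hv ⟨(i₀ : ℕ), lt_of_lt_of_le i₀.isLt hm⟩
          rw [dif_pos i₀.isLt] at this
          simp only [Fin.eta] at this
          exact (mul_ne_zero (ne_of_gt (hk i₀)) hi₀) this
        · funext r
          have hSr : (∑ i, (k i * φ i ξ) • gradient (φ i) ξ) r = (0 : EuclideanSpace ℝ (Fin n)) r := by rw [hS]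
          simp only [Matrix.mulVec, dotProduct, Matrix.of_apply, Pi.zero_apply]
          have : ∀ j : Fin n, (if h : (j : ℕ) < n - 1 then gradient (φ ⟨j, h⟩) ξ r else u r) *
              (if hj : (j : ℕ) < n - 1 then k ⟨j, hj⟩ * φ ⟨j, hj⟩ ξ else 0)
              = if hj : (j : ℕ) < n - 1 then (k ⟨j, hj⟩ * φ ⟨j, hj⟩ ξ) * gradient (φ ⟨j, hj⟩) ξ r else 0 := by
            intro j
            by_cases hj : (j : ℕ) < n - 1
            · rw [dif_pos hj, dif_pos hj, dif_pos hj, mul_comm]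
            · rw [dif_neg hj, dif_neg hj, dif_neg hj, mul_zero]
          rw [Finset.sum_congr rfl (fun j _ => this j),
            sum_fin_dite hm (fun i => (k i * φ i ξ) * gradient (φ i) ξ r)]
          have : (∑ i, (k i * φ i ξ) • gradient (φ i) ξ) r
              = ∑ i, (k i * φ i ξ) * gradient (φ i) ξ r := by
            rw [WithLp.ofLp_sum, Finset.sum_apply]
            simp
          rw [← this, hSr]
          rfl
      have := hdet (bot ξ)
      rwa [real_inner_self_eq_norm_sq, pow_eq_zero_iff (n := 2) (by norm_num), norm_eq_zero] at this
  · intro h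
    rcases h with h | h
    · simp [h]
    · -- bot ξ = S, and ⟪bot ξ, S⟫ = 0
      have hbS : bot ξ = ∑ i, (k i * φ i ξ) • gradient (φ i) ξ := by
        have := sub_eq_zero.mp h
        exact this
      have hz : ⟪bot ξ, (∑ i, (k i * φ i ξ) • gradient (φ i) ξ : EuclideanSpace ℝ (Fin n))⟫ = 0 := by
        rw [inner_sum]
        refine Finset.sum_eq_zero fun i _ => ?_
        rw [real_inner_smul_right, horth, mul_zero]
      rw [← hbS] at hz
      have hb0 : bot ξ = 0 := by
        rwa [real_inner_self_eq_norm_sq, pow_eq_zero_iff (n := 2) (by norm_num),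
          norm_eq_zero] at hz
      rw [hbS] at hb0
      exact hb0
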